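/- Let n, m ∈ ℕ with 1 ≤ m + 1 ≤ n. Set δ_y = ⌊(n+1)/(m+1)⌋, δ_z = ⌊(n+1)/(m+2)⌋, n_y = (m+1)(1+δ_y) − n − 1 and n_z = (m+2)(1+δ_z) − n − 1. Define Δ_{y,i} = δ_y for 1 ≤ i ≤ n_y and Δ_{y,i} = δ_y + 1 for n_y + 1 ≤ i ≤ m+1, and define Δ_{z,i} = δ_z for 1 ≤ i ≤ n_z and Δ_{z,i} = δ_z + 1 for n_z + 1 ≤ i ≤ m+2. Then for every l with 1 ≤ l ≤ m+1: Σ_{k=1}^{l} Δ_{z,k} ≤ Σ_{k=1}^{l} Δ_{y,k} ≤ Σ_{k=1}^{l+1} Δ_{z,k}. -/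

import Mathlib

open Finset

lemma cnt_aux (nq L : ℕ) :
    ∑ k ∈ Finset.Icc 1 L, (if k ≤ nq then 0 else 1) = L - min L nq := by
  induction L with
  | zero => simp
  | succ L ih =>
    rw [Finset.sum_Icc_succ_top (Nat.le_add_left 1 L), ih]
    split_ifs <;> omega

lemma gap_sum (δ nq L : ℕ) :
    ∑ k ∈ Finset.Icc 1 L, (if k ≤ nq then δ else δ + 1)
      = L * δ + (L - min L nq) := by
  have h : ∀ k ∈ Finset.Icc 1 L,
      (if k ≤ nq then δ else δ + 1) = δ + (if k ≤ nq then 0 else 1) := by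
    intro k _; split_ifs <;> omega
  rw [Finset.sum_congr rfl h, Finset.sum_add_distrib, Finset.sum_const, cnt_aux,
    Nat.card_Icc, smul_eq_mul, Nat.add_sub_cancel]

/-- Interlacing (alternating) property of the canonical balanced gap sequences with
`m+1` and `m+2` parts summing to `n+1`, listing the smaller gaps first. -/
theorem statement1 (n m : ℕ) (hmn : m + 1 ≤ n)
    (δy δz ny nz : ℕ)
    (hδy : δy = (n + 1) / (m + 1)) (hδz : δz = (n + 1) / (m + 2))
    (hny : ny = (m + 1) * (1 + δy) - (n + 1))
    (hnz : nz = (m + 2) * (1 + δz) - (n + 1))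
    (Δy Δz : ℕ → ℕ)
    (hΔy : ∀ i, 1 ≤ i → i ≤ m + 1 → Δy i = if i ≤ ny then δy else δy + 1)
    (hΔz : ∀ i, 1 ≤ i → i ≤ m + 2 → Δz i = if i ≤ nz then δz else δz + 1)
    (l : ℕ) (hl1 : 1 ≤ l) (hl2 : l ≤ m + 1) :
    (∑ k ∈ Finset.Icc 1 l, Δz k ≤ ∑ k ∈ Finset.Icc 1 l, Δy k) ∧
    (∑ k ∈ Finset.Icc 1 l, Δy k ≤ ∑ k ∈ Finset.Icc 1 (l + 1), Δz k) := by
  -- closed forms for the three partial sums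
  have hy : ∑ k ∈ Finset.Icc 1 l, Δy k = l * δy + (l - min l ny) := by
    rw [Finset.sum_congr rfl (fun k hk => by
      simp only [Finset.mem_Icc] at hk
      exact hΔy k hk.1 (hk.2.trans hl2)), gap_sum]
  have hz1 : ∑ k ∈ Finset.Icc 1 l, Δz k = l * δz + (l - min l nz) := by
    rw [Finset.sum_congr rfl (fun k hk => by
      simp only [Finset.mem_Icc] at hk
      exact hΔz k hk.1 (by omega)), gap_sum]
  have hz2 : ∑ k ∈ Finset.Icc 1 (l + 1), Δz k
      = (l + 1) * δz + ((l + 1) - min (l + 1) nz) := by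
    rw [Finset.sum_congr rfl (fun k hk => by
      simp only [Finset.mem_Icc] at hk
      exact hΔz k hk.1 (by omega)), gap_sum]
  rw [hy, hz1, hz2]
  -- arithmetic setup
  set r := (n + 1) % (m + 1) with hr
  set s := (n + 1) % (m + 2) with hs
  have hrlt : r < m + 1 := Nat.mod_lt _ (by omega)
  have hslt : s < m + 2 := Nat.mod_lt _ (by omega)
  have hA : (m + 1) * δy + r = n + 1 := by
    rw [hδy, hr]; exact Nat.div_add_mod _ _
  have hB : (m + 2) * δz + s = n + 1 := by
    rw [hδz, hs]; exact Nat.div_add_mod _ _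
  have hδz1 : 1 ≤ δz := by
    rw [hδz]; exact (Nat.one_le_div_iff (by omega)).2 (by omega)
  have hδzy : δz ≤ δy := by
    rw [hδy, hδz]; exact Nat.div_le_div_left (by omega) (by omega)
  have hny' : ny = m + 1 - r := by
    have e1 : (m + 1) * (1 + δy) = (m + 1) + (m + 1) * δy := by ring
    omega
  have hnz' : nz = m + 2 - s := by
    have e1 : (m + 2) * (1 + δz) = (m + 2) + (m + 2) * δz := by ring
    omega
  obtain ⟨d, hd⟩ : ∃ d, δy = δz + d := ⟨δy - δz, by omega⟩
  subst hd
  have hPQ : l * (δz + d) = l * δz + l * d := by ring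
  have hQ1 : (l + 1) * δz = l * δz + δz := by ring
  have hC : (m + 1) * d + r = δz + s := by
    have e2 : (m + 2) * δz = (m + 1) * δz + δz := by ring
    have e3 : (m + 1) * (δz + d) = (m + 1) * δz + (m + 1) * d := by ring
    omega
  rcases Nat.eq_zero_or_pos d with hd0 | hd1
  · subst hd0
    simp only [Nat.mul_zero, Nat.add_zero] at *
    omega
  · have hEl : l ≤ l * d := Nat.le_mul_of_pos_right l hd1
    have hEC : l * d ≤ (m + 1) * d := Nat.mul_le_mul_right _ (by omega)
    have hEC2 : l * d + (m + 1) ≤ (m + 1) * d + l := by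
      have e4 : (m + 1 - l) * d = (m + 1) * d - l * d := Nat.sub_mul _ _ _
      have e5 : m + 1 - l ≤ (m + 1 - l) * d := Nat.le_mul_of_pos_right _ hd1
      omega
    omega
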